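/- There are infinitely many positive integers m such that the set φ⁻¹(m) = {n : φ(n) = m} is non-empty and contains exactly as many odd elements as even elements. -/

import Mathlib

open Nat

lemma four_dvd_totient {n : ℕ} (hn : 0 < n) (h4 : 4 ∣ n) (hm : 2 < n.totient) :
    4 ∣ n.totient := by
  set a := n.factorization 2 with ha
  set s := ordCompl[2] n with hs
  have hn0 : n ≠ 0 := hn.ne'
  have hfact : 2 ^ a * s = n := Nat.ordProj_mul_ordCompl_eq_self n 2
  have hsodd : Odd s := Nat.odd_iff.mpr <| by
    have := Nat.not_dvd_ordCompl Nat.prime_two hn0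
    omega
  have hs0 : 0 < s := Nat.ordCompl_pos 2 hn0
  have ha2 : 2 ≤ a := by
    rw [ha, ← Nat.Prime.pow_dvd_iff_le_factorization Nat.prime_two hn0]
    simpa using h4
  have hcop : Nat.Coprime (2 ^ a) s :=
    Nat.Coprime.pow_left a (Nat.coprime_two_left.mpr hsodd)
  have htot : n.totient = 2 ^ (a - 1) * s.totient := by
    rw [← hfact, Nat.totient_mul hcop,
      Nat.totient_prime_pow Nat.prime_two (by omega)]
    ring_nf
  rcases eq_or_lt_of_le (Nat.succ_le_of_lt hs0) with h1 | h1
  · -- s = 1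
    have hs1 : s = 1 := h1.symm
    rw [htot, hs1, Nat.totient_one, mul_one] at hm ⊢
    have : 2 ≤ a - 1 := by
      by_contra h
      have h1 : a - 1 = 1 := by omega
      rw [h1] at hm
      norm_num at hm
    calc (4 : ℕ) = 2 ^ 2 := by norm_num
    _ ∣ 2 ^ (a - 1) := pow_dvd_pow 2 this
  · -- s ≥ 2, and s odd so s ≥ 3
    have hs3 : 2 < s := by
      rcases hsodd with ⟨k, hk⟩; omega
    have hst : 2 ∣ s.totient := (Nat.totient_even hs3).two_dvd
    rw [htot]
    have h2 : 2 ∣ 2 ^ (a - 1) := dvd_pow_self 2 (by omega)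
    obtain ⟨u, hu⟩ := h2; obtain ⟨v, hv⟩ := hst
    exact ⟨u * v, by rw [hu, hv]; ring⟩

lemma even_eq_image (m : ℕ) (hm4 : m % 4 = 2) (hm2 : 2 < m) :
    {n : ℕ | 0 < n ∧ Even n ∧ Nat.totient n = m} =
      (fun n => 2 * n) '' {n : ℕ | 0 < n ∧ Odd n ∧ Nat.totient n = m} := by
  ext n
  constructor
  · rintro ⟨hn, hev, htot⟩
    have h4 : ¬ 4 ∣ n := by
      intro h4
      have := four_dvd_totient hn h4 (htot ▸ hm2)
      omega
    obtain ⟨k, hk⟩ := hev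
    have hk' : n = 2 * k := by omega
    have hkodd : Odd k := by
      rw [Nat.odd_iff]
      by_contra h
      exact h4 ⟨k / 2, by omega⟩
    refine ⟨k, ⟨by omega, hkodd, ?_⟩, hk'.symm⟩
    rw [hk', Nat.totient_mul (Nat.coprime_two_left.mpr hkodd), Nat.totient_two,
      one_mul] at htot
    exact htot
  · rintro ⟨k, ⟨hk, hkodd, htot⟩, rfl⟩
    show 0 < 2 * k ∧ Even (2 * k) ∧ Nat.totient (2 * k) = m
    refine ⟨by omega, ⟨k, by ring⟩, ?_⟩
    rw [Nat.totient_mul (Nat.coprime_two_left.mpr hkodd), Nat.totient_two, one_mul, htot]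

theorem infinite_balanced_preimages :
    {m : ℕ | 0 < m ∧ {n : ℕ | 0 < n ∧ Nat.totient n = m}.Nonempty ∧
      {n : ℕ | 0 < n ∧ Odd n ∧ Nat.totient n = m}.ncard =
        {n : ℕ | 0 < n ∧ Even n ∧ Nat.totient n = m}.ncard}.Infinite := by
  have ha : IsUnit (3 : ZMod 4) := by decide
  have hinf : {p : ℕ | p.Prime ∧ (p : ZMod 4) = 3}.Infinite :=
    Nat.infinite_setOfPred_prime_and_eq_mod ha
  have hinf' : ({p : ℕ | p.Prime ∧ (p : ZMod 4) = 3} \ {3}).Infinite :=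
    hinf.diff (Set.finite_singleton 3)
  have hinj : Set.InjOn (fun p => p - 1) ({p : ℕ | p.Prime ∧ (p : ZMod 4) = 3} \ {3}) := by
    rintro p ⟨⟨hp, _⟩, _⟩ q ⟨⟨hq, _⟩, _⟩ h
    have := hp.two_le; have := hq.two_le
    simp only at h; omega
  refine Set.Infinite.mono ?_ (hinf'.image hinj)
  rintro m ⟨p, ⟨⟨hp, hp4⟩, hp3⟩, rfl⟩
  simp only [Set.mem_singleton_iff] at hp3
  beta_reduce
  have hpmod : p % 4 = 3 := by
    have : (p : ZMod 4) = ((3 : ℕ) : ZMod 4) := by exact_mod_cast hp4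
    have := (ZMod.natCast_eq_natCast_iff _ _ _).mp this
    have h3 : p % 4 = 3 % 4 := this
    omega
  have hp2 : 2 ≤ p := hp.two_le
  have hp7 : 7 ≤ p := by omega
  have hm4 : (p - 1) % 4 = 2 := by omega
  have hm2 : 2 < p - 1 := by omega
  refine ⟨by omega, ⟨p, by omega, ?_⟩, ?_⟩
  · rw [Nat.totient_prime hp]
  · rw [even_eq_image (p - 1) hm4 hm2,
      Set.ncard_image_of_injective _ (mul_right_injective₀ two_ne_zero)]
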